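/- Let n ≤ m with n | m and p = m/n. Suppose (τ_{ij}) is a p×n nonnegative real matrix whose every row sums to 1/p, and k of its entries are nonzero. Then ρ = ∑_{i=0}^{p−1} ∑_{j=0}^{n−1} τ_{ij} |ψ_{in,j}⟩⟨ψ_{in,j}| is a density operator on C^n ⊗ C^m of rank k with tr_B ρ = (1/n) I_n and tr_A ρ = (1/m) I_m. -/

import Mathlib

open ComplexOrder

/-- `ω = e^{2πi/n}`, a primitive `n`-th root of unity. -/
noncomputable def omegaC (n : ℕ) : ℂ := Complex.exp (2 * Real.pi * Complex.I / n)

/-- The cyclic shift operator `X` on `ℂ^m`: `X |j⟩ = |j + 1 mod m⟩`. -/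
def shiftX (m : ℕ) [NeZero m] : Matrix (Fin m) (Fin m) ℂ :=
  fun i j => if i = j + 1 then 1 else 0

/-- The generalized clock operator `Z_n` on `ℂ^m`: `Z_n |i⟩ = ω^i |i⟩` with `ω = e^{2πi/n}`. -/
noncomputable def weylZ (n m : ℕ) : Matrix (Fin m) (Fin m) ℂ :=
  Matrix.diagonal fun i : Fin m => omegaC n ^ (i : ℕ)

/-- The maximally entangled state `|ψ₀₀⟩ = (1/√n) ∑_{s<n} |s⟩ ⊗ |s⟩` in `ℂ^n ⊗ ℂ^m`. -/
noncomputable def psi00 (n m : ℕ) : Fin n × Fin m → ℂ :=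
  fun p => if (p.1 : ℕ) = (p.2 : ℕ) then ((Real.sqrt n : ℝ)⁻¹ : ℂ) else 0

/-- Apply an operator `M` on `ℂ^m` to the second tensor factor of `ℂ^n ⊗ ℂ^m`. -/
noncomputable def applyB {n m : ℕ} (M : Matrix (Fin m) (Fin m) ℂ)
    (v : Fin n × Fin m → ℂ) : Fin n × Fin m → ℂ :=
  fun p => ∑ c : Fin m, M p.2 c * v (p.1, c)

/-- `|ψ_{ij}⟩ = (I_n ⊗ X^i Z_n^j) |ψ₀₀⟩`. -/
noncomputable def psiV (n m : ℕ) [NeZero m] (i : Fin m) (j : Fin n) :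
    Fin n × Fin m → ℂ :=
  applyB (shiftX m ^ (i : ℕ) * weylZ n m ^ (j : ℕ)) (psi00 n m)

/-- The rank-one projector `|v⟩⟨v|`. -/
noncomputable def proj {α : Type*} (v : α → ℂ) : Matrix α α ℂ :=
  fun p q => v p * star (v q)

/-- Partial trace over the second tensor factor. -/
noncomputable def trB {n m : ℕ} (ρ : Matrix (Fin n × Fin m) (Fin n × Fin m) ℂ) :
    Matrix (Fin n) (Fin n) ℂ :=
  fun a a' => ∑ b : Fin m, ρ (a, b) (a', b)

/-- Partial trace over the first tensor factor. -/
noncomputable def trA {n m : ℕ} (ρ : Matrix (Fin n × Fin m) (Fin n × Fin m) ℂ) :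
    Matrix (Fin m) (Fin m) ℂ :=
  fun b b' => ∑ a : Fin n, ρ (a, b) (a, b')

/-- The index `i·n` in `Fin m`, for `i : Fin p` and `m = p·n`. -/
def mulIdx {p n m : ℕ} (hm : m = p * n) (hn : 0 < n) (i : Fin p) : Fin m :=
  ⟨(i : ℕ) * n, by
    subst hm
    exact Nat.mul_lt_mul_of_lt_of_le i.isLt le_rfl hn⟩

-- auxiliary lemmas
open Matrix
open Fin.NatCast

lemma omegaC_ne_zero (n : ℕ) : omegaC n ≠ 0 := Complex.exp_ne_zero _

lemma omegaC_prim (n : ℕ) [NeZero n] : IsPrimitiveRoot (omegaC n) n :=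
  Complex.isPrimitiveRoot_exp n (NeZero.ne n)

lemma star_omegaC (n : ℕ) : star (omegaC n) = (omegaC n)⁻¹ := by
  rw [omegaC, ← Complex.exp_neg]
  show (starRingEnd ℂ) _ = _
  rw [← Complex.exp_conj]
  congr 1
  simp [map_div₀, Complex.conj_I, map_ofNat]
  ring

lemma star_omegaC_pow (n t : ℕ) : star (omegaC n ^ t) = (omegaC n ^ t)⁻¹ := by
  rw [star_pow, star_omegaC, inv_pow]

lemma omegaC_mul_star_self (n t : ℕ) : omegaC n ^ t * star (omegaC n ^ t) = 1 := by
  rw [star_omegaC_pow, mul_inv_cancel₀ (pow_ne_zero _ (omegaC_ne_zero n))]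

lemma sum_omega (n : ℕ) [NeZero n] (j j' : Fin n) :
    ∑ a : Fin n, omegaC n ^ ((a : ℕ) * (j : ℕ)) * star (omegaC n ^ ((a : ℕ) * (j' : ℕ)))
      = if j = j' then (n : ℂ) else 0 := by
  have hne := omegaC_ne_zero n
  set ζ : ℂ := omegaC n ^ (j : ℕ) * (omegaC n ^ (j' : ℕ))⁻¹ with hζ
  have hterm : ∀ a : Fin n,
      omegaC n ^ ((a : ℕ) * (j : ℕ)) * star (omegaC n ^ ((a : ℕ) * (j' : ℕ))) = ζ ^ (a : ℕ) := by
    intro a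
    rw [star_omegaC_pow, pow_mul', pow_mul', ← inv_pow, ← mul_pow]
  simp only [hterm]
  rw [Fin.sum_univ_eq_sum_range (fun a => ζ ^ a) n]
  by_cases hjj : j = j'
  · subst hjj
    rw [if_pos rfl]
    have : ζ = 1 := mul_inv_cancel₀ (pow_ne_zero _ hne)
    simp [this]
  · rw [if_neg hjj]
    have hζ1 : ζ ≠ 1 := by
      intro h
      apply hjj
      have : omegaC n ^ (j : ℕ) = omegaC n ^ (j' : ℕ) :=
        (mul_inv_eq_one₀ (pow_ne_zero _ hne)).mp h
      exact Fin.ext ((omegaC_prim n).pow_inj j.isLt j'.isLt this)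
    have hζn : ζ ^ n = 1 := by
      have h1 : (omegaC n ^ (j : ℕ)) ^ n = 1 := by
        rw [← pow_mul, mul_comm, pow_mul, (omegaC_prim n).pow_eq_one, one_pow]
      have h2 : (omegaC n ^ (j' : ℕ)) ^ n = 1 := by
        rw [← pow_mul, mul_comm, pow_mul, (omegaC_prim n).pow_eq_one, one_pow]
      rw [hζ, mul_pow, inv_pow, h1, h2, inv_one, one_mul]
    rw [geom_sum_eq hζ1, hζn, sub_self, zero_div]

lemma shiftX_pow_apply (m : ℕ) [NeZero m] (k : ℕ) (b c : Fin m) :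
    (shiftX m ^ k) b c = if b = c + (k : Fin m) then 1 else 0 := by
  induction k generalizing c with
  | zero => simp [Matrix.one_apply]
  | succ k ih =>
    rw [pow_succ, Matrix.mul_apply]
    have hcast : ((k + 1 : ℕ) : Fin m) = (k : Fin m) + 1 := by push_cast; ring
    rw [Finset.sum_eq_single (c + 1)]
    · rw [ih, shiftX, if_pos rfl, mul_one, hcast]
      congr 1
      rw [eq_iff_iff]
      constructor <;> intro h <;> [skip; skip] <;> (rw [h]; abel)
    · intro c' _ hc'
      have : shiftX m c' c = 0 := by rw [shiftX, if_neg hc']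
      rw [this, mul_zero]
    · intro h; exact absurd (Finset.mem_univ _) h

lemma psiV_apply (n m : ℕ) [NeZero n] [NeZero m] (hnm : n ≤ m) (I : Fin m) (j : Fin n)
    (a : Fin n) (b : Fin m) :
    psiV n m I j (a, b) =
      if b = Fin.castLE hnm a + I then
        omegaC n ^ ((a : ℕ) * (j : ℕ)) * ((Real.sqrt n : ℝ)⁻¹ : ℂ) else 0 := by
  have hZ : weylZ n m ^ (j : ℕ)
      = Matrix.diagonal (fun c : Fin m => omegaC n ^ ((c : ℕ) * (j : ℕ))) := by
    rw [weylZ, Matrix.diagonal_pow]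
    refine congrArg Matrix.diagonal (funext fun c => ?_)
    rw [Pi.pow_apply, ← pow_mul]
  show ∑ c : Fin m, (shiftX m ^ (I : ℕ) * weylZ n m ^ (j : ℕ)) b c * psi00 n m (a, c) = _
  rw [Finset.sum_eq_single (Fin.castLE hnm a)]
  · rw [hZ, Matrix.mul_diagonal, shiftX_pow_apply]
    have h0 : psi00 n m (a, Fin.castLE hnm a) = ((Real.sqrt n : ℝ)⁻¹ : ℂ) := by
      rw [psi00]; simp
    rw [h0, Fin.cast_val_eq_self]
    simp only [Fin.coe_castLE]
    by_cases hb : b = Fin.castLE hnm a + I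
    · rw [if_pos hb, if_pos hb, one_mul, mul_comm ((a:ℕ)) ((j:ℕ)), mul_comm ((j:ℕ)) ((a:ℕ))]
    · rw [if_neg hb, if_neg hb, zero_mul, zero_mul]
  · intro c _ hc
    have : psi00 n m (a, c) = 0 := by
      rw [psi00, if_neg]
      intro h
      exact hc (Fin.ext (by simpa using h.symm))
    rw [this, mul_zero]
  · intro h; exact absurd (Finset.mem_univ _) h

/-- The index `a + i·n` in `Fin m`. -/
def uIdx {n m p : ℕ} [NeZero n] (hnm : n ≤ m) (hm : m = p * n) (hn : 0 < n)
    (a : Fin n) (i : Fin p) : Fin m :=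
  Fin.castLE hnm a + mulIdx hm hn i

lemma uIdx_val {n m p : ℕ} [NeZero n] (hnm : n ≤ m) (hm : m = p * n) (hn : 0 < n)
    (a : Fin n) (i : Fin p) : ((uIdx hnm hm hn a i : Fin m) : ℕ) = (a : ℕ) + (i : ℕ) * n := by
  have hlt : (a : ℕ) + (i : ℕ) * n < m := by
    have h1 : (a : ℕ) + (i : ℕ) * n < ((i : ℕ) + 1) * n := by
      have := a.isLt; nlinarith [a.isLt]
    have h2 : ((i : ℕ) + 1) * n ≤ p * n := Nat.mul_le_mul_right n i.isLt
    omega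
  rw [uIdx, Fin.val_add, Fin.coe_castLE]
  show ((a : ℕ) + (i : ℕ) * n) % m = _
  exact Nat.mod_eq_of_lt hlt

lemma key_inj {n m p : ℕ} [NeZero n] (hnm : n ≤ m) (hm : m = p * n) (hn : 0 < n)
    (a a' : Fin n) (i i' : Fin p) :
    uIdx hnm hm hn a i = uIdx hnm hm hn a' i' ↔ a = a' ∧ i = i' := by
  constructor
  · intro h
    have hv := congrArg Fin.val h
    rw [uIdx_val, uIdx_val] at hv
    have ha : (a : ℕ) = (a' : ℕ) := by
      have := congrArg (· % n) hv
      simpa [Nat.add_mul_mod_self_right, Nat.mod_eq_of_lt a.isLt,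
        Nat.mod_eq_of_lt a'.isLt] using this
    have hi : (i : ℕ) = (i' : ℕ) :=
      Nat.eq_of_mul_eq_mul_right hn (by omega)
    exact ⟨Fin.ext ha, Fin.ext hi⟩
  · rintro ⟨rfl, rfl⟩; rfl

lemma key_surj {n m p : ℕ} [NeZero n] [NeZero m] [NeZero p] (hnm : n ≤ m) (hm : m = p * n)
    (hn : 0 < n) (b : Fin m) :
    ∃ a : Fin n, ∃ i : Fin p, b = uIdx hnm hm hn a i := by
  have hp : ((b : ℕ) / n) < p := by
    rw [Nat.div_lt_iff_lt_mul hn, ← hm]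
    exact b.isLt
  refine ⟨⟨(b : ℕ) % n, Nat.mod_lt _ hn⟩, ⟨(b : ℕ) / n, hp⟩, ?_⟩
  apply Fin.ext
  rw [uIdx_val]
  exact (Nat.mod_add_div' (b : ℕ) n).symm

lemma sqrt_inv_sq (n : ℕ) [NeZero n] :
    ((Real.sqrt n : ℝ)⁻¹ : ℂ) * ((Real.sqrt n : ℝ)⁻¹ : ℂ) = ((n : ℝ)⁻¹ : ℂ) := by
  norm_cast
  rw [← mul_inv, Real.mul_self_sqrt (Nat.cast_nonneg n)]

lemma star_s (n : ℕ) : star ((Real.sqrt n : ℝ)⁻¹ : ℂ) = ((Real.sqrt n : ℝ)⁻¹ : ℂ) := by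
  simp

lemma prod_eval {n m p : ℕ} [NeZero n] [NeZero m] (hnm : n ≤ m) (hm : m = p * n) (hn : 0 < n)
    (i i' : Fin p) (j j' : Fin n) (a a' : Fin n) (b b' : Fin m) :
    psiV n m (mulIdx hm hn i) j (a, b) * star (psiV n m (mulIdx hm hn i') j' (a', b'))
      = if b = uIdx hnm hm hn a i ∧ b' = uIdx hnm hm hn a' i' then
          omegaC n ^ ((a : ℕ) * (j : ℕ)) * star (omegaC n ^ ((a' : ℕ) * (j' : ℕ))) * ((n : ℝ)⁻¹ : ℂ)
        else 0 := by
  rw [psiV_apply n m hnm, psiV_apply n m hnm]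
  show (if b = uIdx hnm hm hn a i then _ else _) * star (if b' = uIdx hnm hm hn a' i' then _ else _) = _
  by_cases h1 : b = uIdx hnm hm hn a i <;> by_cases h2 : b' = uIdx hnm hm hn a' i'
  · rw [if_pos h1, if_pos h2, if_pos ⟨h1, h2⟩, star_mul', star_s, mul_mul_mul_comm,
      sqrt_inv_sq]
  · rw [if_pos h1, if_neg h2, if_neg (fun h => h2 h.2), star_zero, mul_zero]
  · rw [if_neg h1, zero_mul, if_neg (fun h : _ ∧ _ => h1 h.1)]
  · rw [if_neg h1, zero_mul, if_neg (fun h : _ ∧ _ => h1 h.1)]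

lemma gram_sum {n m p : ℕ} [NeZero n] [NeZero m] (hnm : n ≤ m) (hm : m = p * n) (hn : 0 < n)
    (i i' : Fin p) (j j' : Fin n) :
    ∑ x : Fin n × Fin m,
        psiV n m (mulIdx hm hn i) j x * star (psiV n m (mulIdx hm hn i') j' x)
      = if i = i' ∧ j = j' then 1 else 0 := by
  rw [Fintype.sum_prod_type]
  have hterm : ∀ (a : Fin n) (b : Fin m),
      psiV n m (mulIdx hm hn i) j (a, b) * star (psiV n m (mulIdx hm hn i') j' (a, b))
        = if b = uIdx hnm hm hn a i ∧ b = uIdx hnm hm hn a i' then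
            omegaC n ^ ((a : ℕ) * (j : ℕ)) * star (omegaC n ^ ((a : ℕ) * (j' : ℕ))) * ((n : ℝ)⁻¹ : ℂ)
          else 0 := fun a b => prod_eval hnm hm hn i i' j j' a a b b
  simp only [hterm]
  by_cases hii : i = i'
  · subst hii
    simp only [and_self]
    have hcol : ∀ a : Fin n,
        (∑ b : Fin m, if b = uIdx hnm hm hn a i then
            omegaC n ^ ((a : ℕ) * (j : ℕ)) * star (omegaC n ^ ((a : ℕ) * (j' : ℕ))) * ((n : ℝ)⁻¹ : ℂ)
          else 0)
        = omegaC n ^ ((a : ℕ) * (j : ℕ)) * star (omegaC n ^ ((a : ℕ) * (j' : ℕ))) * ((n : ℝ)⁻¹ : ℂ) := by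
      intro a
      rw [Finset.sum_ite_eq' Finset.univ (uIdx hnm hm hn a i)]
      simp
    simp only [hcol]
    rw [← Finset.sum_mul, sum_omega]
    by_cases hjj : j = j'
    · rw [if_pos hjj, if_pos (by tauto)]
      push_cast
      exact mul_inv_cancel₀ (Nat.cast_ne_zero.mpr (NeZero.ne n))
    · rw [if_neg hjj, if_neg (by tauto), zero_mul]
  · rw [if_neg (by tauto)]
    refine Finset.sum_eq_zero fun a _ => Finset.sum_eq_zero fun b _ => ?_
    rw [if_neg]
    rintro ⟨h1, h2⟩
    exact hii ((key_inj hnm hm hn a a i i').mp (h1.symm.trans h2)).2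

/-- let `n ∣ m`, `p = m/n`, and let `(τ_{ij})` be a `p × n` nonnegative
matrix every row of which sums to `1/p`, with exactly `k` nonzero entries. Then
`ρ = ∑_{i,j} τ_{ij} |ψ_{in,j}⟩⟨ψ_{in,j}|` is a density operator on `ℂ^n ⊗ ℂ^m` of rank
`k` with margins `(1/n) I_n` and `(1/m) I_m`. -/
theorem weyl_construction_divisible (n m p : ℕ) [NeZero n] [NeZero m] [NeZero p]
    (hnm : n ≤ m) (hm : m = p * n) (hn : 0 < n)
    (τ : Fin p → Fin n → ℝ) (hτ : ∀ i j, 0 ≤ τ i j)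
    (hrow : ∀ i : Fin p, ∑ j, τ i j = (p : ℝ)⁻¹)
    (k : ℕ)
    (hk : k = (Finset.univ.filter fun q : Fin p × Fin n => τ q.1 q.2 ≠ 0).card)
    (ρ : Matrix (Fin n × Fin m) (Fin n × Fin m) ℂ)
    (hρ : ρ = ∑ i : Fin p, ∑ j : Fin n,
        (τ i j : ℂ) • proj (psiV n m (mulIdx hm hn i) j)) :
    ρ.PosSemidef ∧ ρ.trace = 1 ∧ ρ.rank = k ∧
      trB ρ = ((n : ℂ))⁻¹ • (1 : Matrix (Fin n) (Fin n) ℂ) ∧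
      trA ρ = ((m : ℂ))⁻¹ • (1 : Matrix (Fin m) (Fin m) ℂ) := by
  have hrowC : ∀ i : Fin p, ∑ j : Fin n, (τ i j : ℂ) = ((p : ℝ)⁻¹ : ℂ) := by
    intro i
    rw [← Complex.ofReal_sum, hrow i, Complex.ofReal_inv]
  have hsum1 : ∑ i : Fin p, ∑ j : Fin n, (τ i j : ℂ) = 1 := by
    simp only [hrowC]
    rw [Finset.sum_const, Finset.card_univ, Fintype.card_fin, nsmul_eq_mul]
    push_cast
    exact mul_inv_cancel₀ (Nat.cast_ne_zero.mpr (NeZero.ne p))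
  set d : Fin p × Fin n → ℂ := fun q => (τ q.1 q.2 : ℂ) with hd
  set A : Matrix (Fin n × Fin m) (Fin p × Fin n) ℂ :=
    fun x q => psiV n m (mulIdx hm hn q.1) q.2 x with hA
  have hAA : Aᴴ * A = 1 := by
    ext q q'
    rw [Matrix.mul_apply, Matrix.one_apply]
    simp only [Matrix.conjTranspose_apply]
    simp only [hA]
    have hc : ∀ x : Fin n × Fin m,
        star (psiV n m (mulIdx hm hn q.1) q.2 x) * psiV n m (mulIdx hm hn q'.1) q'.2 x
        = psiV n m (mulIdx hm hn q'.1) q'.2 x * star (psiV n m (mulIdx hm hn q.1) q.2 x) :=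
      fun x => mul_comm _ _
    rw [Finset.sum_congr rfl fun x _ => hc x, gram_sum hnm hm hn]
    by_cases h : q = q'
    · rw [if_pos, if_pos h]
      subst h; exact ⟨rfl, rfl⟩
    · rw [if_neg, if_neg h]
      intro hcc; exact h (Prod.ext hcc.1.symm hcc.2.symm)
  have hρe : ∀ x y, ρ x y = ∑ i : Fin p, ∑ j : Fin n, (τ i j : ℂ) *
      (psiV n m (mulIdx hm hn i) j x * star (psiV n m (mulIdx hm hn i) j y)) := by
    intro x y
    rw [hρ]
    simp only [Matrix.sum_apply, Matrix.smul_apply, proj, smul_eq_mul, mul_assoc]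
  have hfact : ρ = A * Matrix.diagonal d * Aᴴ := by
    ext x y
    rw [hρe, Matrix.mul_apply]
    simp only [Matrix.mul_diagonal, Matrix.conjTranspose_apply]
    simp only [hA, hd]
    rw [Fintype.sum_prod_type]
    exact Finset.sum_congr rfl fun i _ => Finset.sum_congr rfl fun j _ => by ring
  have hdpos : ∀ q, (0 : ℂ) ≤ d q := fun q => Complex.zero_le_real.mpr (hτ q.1 q.2)
  have hD : (Matrix.diagonal d).PosSemidef := Matrix.posSemidef_diagonal_iff.mpr hdpos
  refine ⟨?_, ?_, ?_, ?_, ?_⟩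
  · rw [hfact]
    exact hD.mul_mul_conjTranspose_same A
  · rw [hfact, Matrix.trace_mul_cycle, hAA, Matrix.one_mul, Matrix.trace_diagonal]
    rw [Fintype.sum_prod_type]
    exact hsum1
  · have hr1 : ρ.rank ≤ (Matrix.diagonal d).rank := by
      rw [hfact]
      exact le_trans (Matrix.rank_mul_le_left _ _) (Matrix.rank_mul_le_right _ _)
    have hDfact : Matrix.diagonal d = Aᴴ * ρ * A := by
      rw [hfact]
      simp only [← Matrix.mul_assoc]
      rw [hAA, Matrix.one_mul, Matrix.mul_assoc, hAA, Matrix.mul_one]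
    have hr2 : (Matrix.diagonal d).rank ≤ ρ.rank := by
      rw [hDfact]
      exact le_trans (Matrix.rank_mul_le_left _ _) (Matrix.rank_mul_le_right _ _)
    rw [le_antisymm hr1 hr2, Matrix.rank_diagonal, Fintype.card_subtype, hk]
    refine congrArg Finset.card (Finset.filter_congr fun q _ => ?_)
    simp [hd, Complex.ofReal_eq_zero]
  · funext a a'
    show ∑ b : Fin m, ρ (a, b) (a', b) = _
    simp only [hρe]
    have hterm : ∀ (b : Fin m) (i : Fin p) (j : Fin n),
        (τ i j : ℂ) * (psiV n m (mulIdx hm hn i) j (a, b) *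
            star (psiV n m (mulIdx hm hn i) j (a', b)))
          = if b = uIdx hnm hm hn a i ∧ b = uIdx hnm hm hn a' i then
              (τ i j : ℂ) * (omegaC n ^ ((a : ℕ) * (j : ℕ)) *
                star (omegaC n ^ ((a' : ℕ) * (j : ℕ))) * ((n : ℝ)⁻¹ : ℂ))
            else 0 := by
      intro b i j
      rw [prod_eval hnm hm hn, mul_ite, mul_zero]
    simp only [hterm]
    by_cases haa : a = a'
    · subst haa
      simp only [and_self]
      rw [Finset.sum_comm]
      have hcol : ∀ i : Fin p,
          (∑ b : Fin m, ∑ j : Fin n, if b = uIdx hnm hm hn a i then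
              (τ i j : ℂ) * (omegaC n ^ ((a : ℕ) * (j : ℕ)) *
                star (omegaC n ^ ((a : ℕ) * (j : ℕ))) * ((n : ℝ)⁻¹ : ℂ)) else 0)
            = ∑ j : Fin n, (τ i j : ℂ) * ((n : ℝ)⁻¹ : ℂ) := by
        intro i
        rw [Finset.sum_comm]
        refine Finset.sum_congr rfl fun j _ => ?_
        rw [Finset.sum_ite_eq' Finset.univ (uIdx hnm hm hn a i)]
        simp only [Finset.mem_univ, if_true]
        rw [omegaC_mul_star_self, one_mul]
      simp only [hcol]
      simp only [← Finset.sum_mul]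
      rw [hsum1, one_mul]
      simp only [Matrix.smul_apply, Matrix.one_apply_eq, smul_eq_mul, mul_one]
      push_cast
      ring
    · refine Eq.trans (Finset.sum_eq_zero fun b _ => Finset.sum_eq_zero fun i _ =>
        Finset.sum_eq_zero fun j _ => ?_) ?_
      · rw [if_neg]
        rintro ⟨h1, h2⟩
        exact haa ((key_inj hnm hm hn a a' i i).mp (h1.symm.trans h2)).1
      · simp [Matrix.one_apply_ne haa]
  · funext b b'
    show ∑ a : Fin n, ρ (a, b) (a, b') = _
    simp only [hρe]
    have hterm : ∀ (a : Fin n) (i : Fin p) (j : Fin n),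
        (τ i j : ℂ) * (psiV n m (mulIdx hm hn i) j (a, b) *
            star (psiV n m (mulIdx hm hn i) j (a, b')))
          = if b = uIdx hnm hm hn a i ∧ b' = uIdx hnm hm hn a i then
              (τ i j : ℂ) * ((n : ℝ)⁻¹ : ℂ) else 0 := by
      intro a i j
      rw [prod_eval hnm hm hn, omegaC_mul_star_self, one_mul, mul_ite, mul_zero]
    simp only [hterm]
    by_cases hbb : b = b'
    · subst hbb
      simp only [and_self]
      have hj : ∀ (a : Fin n) (i : Fin p),
          (∑ j : Fin n, if b = uIdx hnm hm hn a i then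
              (τ i j : ℂ) * ((n : ℝ)⁻¹ : ℂ) else 0)
            = if b = uIdx hnm hm hn a i then ((p : ℝ)⁻¹ : ℂ) * ((n : ℝ)⁻¹ : ℂ) else 0 := by
        intro a i
        by_cases hcond : b = uIdx hnm hm hn a i
        · simp only [if_pos hcond]
          rw [← Finset.sum_mul, hrowC]
        · simp [hcond]
      simp only [hj]
      obtain ⟨a₀, i₀, ha₀⟩ := key_surj hnm hm hn b
      rw [Finset.sum_eq_single a₀]
      · rw [Finset.sum_eq_single i₀]
        · rw [if_pos ha₀]
          simp only [Matrix.smul_apply, Matrix.one_apply_eq, smul_eq_mul, mul_one]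
          rw [hm]
          push_cast
          rw [mul_inv]
        · intro i _ hi
          rw [if_neg]
          intro hcond
          exact hi ((key_inj hnm hm hn a₀ a₀ i i₀).mp (hcond.symm.trans ha₀)).2
        · intro h; exact absurd (Finset.mem_univ _) h
      · intro a _ ha
        refine Finset.sum_eq_zero fun i _ => ?_
        rw [if_neg]
        intro hcond
        exact ha ((key_inj hnm hm hn a a₀ i i₀).mp (hcond.symm.trans ha₀)).1
      · intro h; exact absurd (Finset.mem_univ _) h
    · refine Eq.trans (Finset.sum_eq_zero fun a _ => Finset.sum_eq_zero fun i _ =>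
        Finset.sum_eq_zero fun j _ => ?_) ?_
      · rw [if_neg]
        rintro ⟨h1, h2⟩
        exact hbb (h1.trans h2.symm)
      · simp [Matrix.one_apply_ne hbb]
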